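/- For a standard normal random variable Z and constants c₁ < c₂, the variance of Z conditional on c₁ ≤ Z ≤ c₂ is strictly less than 1 (the unconditional variance). -/

import Mathlib

open MeasureTheory ProbabilityTheory Real Set
open scoped ENNReal NNReal

noncomputable def phi (x : ℝ) : ℝ := (Real.sqrt (2 * π))⁻¹ * Real.exp (-x ^ 2 / 2)

lemma phi_pos (x : ℝ) : 0 < phi x := by
  have : 0 < Real.sqrt (2 * π) := Real.sqrt_pos.2 (by positivity)
  unfold phi; positivity

lemma phi_continuous : Continuous phi := by
  unfold phi; fun_prop

lemma gaussianPDFReal_eq_phi : gaussianPDFReal 0 1 = phi := by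
  funext x
  simp [gaussianPDFReal, phi]

lemma setIntegral_gauss (f : ℝ → ℝ) (s : Set ℝ) (hs : MeasurableSet s) :
    ∫ z in s, f z ∂(gaussianReal 0 1) = ∫ z in s, phi z * f z := by
  rw [gaussianReal_of_var_ne_zero _ one_ne_zero]
  have : (gaussianPDF 0 1) = fun x => ((phi x).toNNReal : ℝ≥0∞) := by
    funext x
    rw [gaussianPDF, gaussianPDFReal_eq_phi, ENNReal.ofReal]
  rw [this, setIntegral_withDensity_eq_setIntegral_smul (phi_continuous.measurable.real_toNNReal) _ hs]
  congr 1
  funext x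
  rw [NNReal.smul_def, Real.coe_toNNReal _ (phi_pos x).le, smul_eq_mul]

lemma hasDerivAt_phi (x : ℝ) : HasDerivAt phi (-x * phi x) x := by
  have h0 : HasDerivAt (fun y : ℝ => -y ^ 2 / 2) (-x) x := by
    have h : HasDerivAt (fun y : ℝ => y ^ 2) (2 * x) x := by
      simpa using hasDerivAt_pow 2 x
    exact (h.neg.div_const 2).congr_deriv (by ring)
  have hexp := h0.exp
  have := hexp.const_mul (Real.sqrt (2 * π))⁻¹
  exact this.congr_deriv (by unfold phi; ring)

lemma hasDerivAt_neg_phi (x : ℝ) : HasDerivAt (fun y => -phi y) (x * phi x) x := by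
  exact (hasDerivAt_phi x).neg.congr_deriv (by ring)

lemma hasDerivAt_neg_mul_phi (x : ℝ) :
    HasDerivAt (fun y => -(y * phi y)) (x ^ 2 * phi x - phi x) x := by
  have h := ((hasDerivAt_id x).mul (hasDerivAt_phi x)).neg
  simp only [id_eq, one_mul] at h
  exact h.congr_deriv (by ring)

/-- The variance of a standard normal conditional on lying in an interval `[c₁, c₂]` is strictly
smaller than `1`, the unconditional variance. -/
theorem truncated_normal_variance_lt_one (c₁ c₂ : ℝ) (hc : c₁ < c₂) :
    (∫ z in Set.Icc c₁ c₂, z ^ 2 ∂(gaussianReal 0 1)) /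
        ((gaussianReal 0 1) (Set.Icc c₁ c₂)).toReal -
      ((∫ z in Set.Icc c₁ c₂, z ∂(gaussianReal 0 1)) /
        ((gaussianReal 0 1) (Set.Icc c₁ c₂)).toReal) ^ 2 < 1 := by
  have hle : c₁ ≤ c₂ := hc.le
  -- convert everything to interval integrals
  have hIcc : ∀ f : ℝ → ℝ, (∫ z in Set.Icc c₁ c₂, phi z * f z) = ∫ z in c₁..c₂, phi z * f z := by
    intro f
    rw [MeasureTheory.integral_Icc_eq_integral_Ioc, intervalIntegral.integral_of_le hle]
  set I0 := ∫ z in c₁..c₂, phi z * 1 with hI0def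
  set I1 := ∫ z in c₁..c₂, phi z * z with hI1def
  set I2 := ∫ z in c₁..c₂, phi z * z ^ 2 with hI2def
  have hint : ∀ g : ℝ → ℝ, Continuous g →
      IntervalIntegrable (fun z => phi z * g z) volume c₁ c₂ := fun g hg =>
    (phi_continuous.mul hg).intervalIntegrable _ _
  -- measure of the interval
  have hp : ((gaussianReal 0 1) (Set.Icc c₁ c₂)).toReal = I0 := by
    have hnn : 0 ≤ ∫ x in Set.Icc c₁ c₂, gaussianPDFReal 0 1 x :=
      MeasureTheory.integral_nonneg fun x => (gaussianPDFReal_pos 0 1 x one_ne_zero).le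
    rw [gaussianReal_apply_eq_integral 0 one_ne_zero, ENNReal.toReal_ofReal hnn,
      gaussianPDFReal_eq_phi, hI0def]
    have h1 := hIcc 1
    simp only [Pi.one_apply, mul_one] at h1 ⊢
    exact h1
  have hInt1 := setIntegral_gauss (fun z => z) (Set.Icc c₁ c₂) measurableSet_Icc
  have hInt2 := setIntegral_gauss (fun z => z ^ 2) (Set.Icc c₁ c₂) measurableSet_Icc
  rw [hp, hInt1, hInt2, hIcc, hIcc]
  -- FTC computations
  have hI1 : I1 = phi c₁ - phi c₂ := by
    rw [hI1def]
    have := intervalIntegral.integral_eq_sub_of_hasDerivAt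
      (f := fun y => -phi y) (f' := fun x => x * phi x)
      (fun x _ => hasDerivAt_neg_phi x)
      ((continuous_id.mul phi_continuous).intervalIntegrable c₁ c₂)
    rw [show (fun z => phi z * z) = fun x => x * phi x by funext x; ring, this]
    ring
  have hI2 : I2 - I0 = c₁ * phi c₁ - c₂ * phi c₂ := by
    have := intervalIntegral.integral_eq_sub_of_hasDerivAt
      (f := fun y => -(y * phi y)) (f' := fun x => x ^ 2 * phi x - phi x)
      (fun x _ => hasDerivAt_neg_mul_phi x)
      ((((continuous_pow 2).mul phi_continuous).sub phi_continuous).intervalIntegrable c₁ c₂)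
    rw [show (fun x : ℝ => x ^ 2 * phi x - phi x) = fun z => phi z * z ^ 2 - phi z * 1 by
        funext x; ring,
      intervalIntegral.integral_sub (hint _ (continuous_pow 2))
        (by simpa using hint 1 continuous_const)] at this
    simp only [← hI2def, ← hI0def] at this
    rw [this]
    ring
  -- positivity facts
  have hI0pos : 0 < I0 := by
    rw [hI0def]
    exact intervalIntegral.intervalIntegral_pos_of_pos
      ((phi_continuous.mul continuous_const).intervalIntegrable _ _)
      (fun x => by simpa using phi_pos x) hc
  have hlow : c₁ * I0 < I1 := by
    have hpos : 0 < ∫ z in c₁..c₂, phi z * (z - c₁) :=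
      intervalIntegral.intervalIntegral_pos_of_pos_on
        (hint _ (by fun_prop))
        (fun x hx => mul_pos (phi_pos x) (sub_pos.2 hx.1)) hc
    have heq : (∫ z in c₁..c₂, phi z * (z - c₁)) = I1 - c₁ * I0 := by
      rw [hI1def, hI0def, ← intervalIntegral.integral_const_mul,
        ← intervalIntegral.integral_sub (g := fun x => c₁ * (phi x * 1)) (hint (fun z => z) continuous_id)
          ((continuous_const.mul (phi_continuous.mul continuous_const)).intervalIntegrable _ _)]
      congr 1
      funext z
      ring
    linarith [heq ▸ hpos]
  have hhigh : I1 < c₂ * I0 := by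
    have hpos : 0 < ∫ z in c₁..c₂, phi z * (c₂ - z) :=
      intervalIntegral.intervalIntegral_pos_of_pos_on
        (hint _ (by fun_prop))
        (fun x hx => mul_pos (phi_pos x) (sub_pos.2 hx.2)) hc
    have heq : (∫ z in c₁..c₂, phi z * (c₂ - z)) = c₂ * I0 - I1 := by
      rw [hI1def, hI0def, ← intervalIntegral.integral_const_mul,
        ← intervalIntegral.integral_sub (f := fun x => c₂ * (phi x * 1))
          ((continuous_const.mul (phi_continuous.mul continuous_const)).intervalIntegrable _ _)
          (hint (fun z => z) continuous_id)]
      congr 1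
      funext z
      ring
    linarith [heq ▸ hpos]
  -- final algebra
  have key : I2 * I0 - I1 ^ 2 < I0 ^ 2 := by
    have h1 := mul_pos (phi_pos c₁) (sub_pos.2 hlow)
    have h2 := mul_pos (phi_pos c₂) (sub_pos.2 hhigh)
    have e : I2 * I0 - I1 ^ 2 - I0 ^ 2
        = -(phi c₁ * (I1 - c₁ * I0)) - phi c₂ * (c₂ * I0 - I1) := by
      linear_combination I0 * hI2 - I1 * hI1
    linarith
  have hrw : I2 / I0 - (I1 / I0) ^ 2 = (I2 * I0 - I1 ^ 2) / I0 ^ 2 := by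
    field_simp
  rw [hrw]
  exact (div_lt_one (by positivity)).2 key
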